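/- Let U be unitary on a finite-dimensional Hilbert space, P an orthogonal projection, E = PUP on ran(P). If Eφ = λφ with |λ| = 1 and Eψ generalized-eigenvector of E for an eigenvalue μ with |μ| < 1 (i.e., (μ - E)^m ψ = 0 for some m), then ⟨ψ, φ⟩ = 0. Hence the center generalized eigenspace of E is orthogonal to the stable generalized eigenspace. -/

import Mathlib

open scoped InnerProductSpace

/-- Let `U` be unitary on a finite-dimensional complex Hilbert space, `P` an orthogonal
projection, and `E = P U P`. Every eigenvector `φ` of `E` for a unimodular eigenvalue `l`
is orthogonal to every generalized eigenvector `ψ` of `E` for an eigenvalue `μ` with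
`‖μ‖ < 1`: the center generalized eigenspace is orthogonal to the stable one. -/
theorem center_orthogonal_to_stable
    {H : Type*} [NormedAddCommGroup H] [InnerProductSpace ℂ H] [FiniteDimensional ℂ H]
    (U P : H →ₗ[ℂ] H)
    (hU : ∀ x y : H, ⟪U x, U y⟫_ℂ = ⟪x, y⟫_ℂ) (hUsurj : Function.Surjective U)
    (hP : P ∘ₗ P = P) (hPsa : ∀ x y : H, ⟪P x, y⟫_ℂ = ⟪x, P y⟫_ℂ)
    (l μ : ℂ) (hl : ‖l‖ = 1) (hμ : ‖μ‖ < 1)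
    (φ : H) (hran : P φ = φ) (hφ : (P ∘ₗ U ∘ₗ P) φ = l • φ)
    (ψ : H) (m : ℕ)
    (hψ : ((μ • (1 : H →ₗ[ℂ] H) - (P ∘ₗ U ∘ₗ P)) ^ m) ψ = 0) :
    ⟪ψ, φ⟫_ℂ = 0 := by
  have hPidem : ∀ x : H, P (P x) = P x := fun x =>
    congrArg (fun f : H →ₗ[ℂ] H => f x) hP
  have hEφ : P (U φ) = l • φ := by
    simpa [LinearMap.comp_apply, hran] using hφ
  -- norm of Uφ equals norm of φ
  have hnUφ : ‖U φ‖ = ‖φ‖ := by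
    have := hU φ φ
    rw [inner_self_eq_norm_sq_to_K, inner_self_eq_norm_sq_to_K] at this
    have h2 : (‖U φ‖ : ℝ) ^ 2 = (‖φ‖ : ℝ) ^ 2 := by exact_mod_cast this
    nlinarith [norm_nonneg (U φ), norm_nonneg φ]
  -- P(Uφ) ⟂ (Uφ - P(Uφ))
  have horth : ⟪P (U φ), U φ - P (U φ)⟫_ℂ = 0 := by
    rw [hPsa]
    simp [map_sub, hPidem]
  -- Uφ = lφ
  have hUφ : U φ = l • φ := by
    have hdecomp : U φ = P (U φ) + (U φ - P (U φ)) := by abel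
    have hpy : ‖U φ‖ ^ 2 = ‖P (U φ)‖ ^ 2 + ‖U φ - P (U φ)‖ ^ 2 := by
      rw [hdecomp]
      rw [@norm_add_sq ℂ]
      rw [horth]
      simp
    have hnP : ‖P (U φ)‖ = ‖φ‖ := by rw [hEφ, norm_smul, hl]; simp
    have : ‖U φ - P (U φ)‖ = 0 := by
      rw [hnUφ, hnP] at hpy
      nlinarith [norm_nonneg (U φ - P (U φ))]
    have h0 : U φ - P (U φ) = 0 := norm_eq_zero.mp this
    have : U φ = P (U φ) := by linear_combination (norm := abel) h0
    rw [this, hEφ]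
  have hll : (starRingEnd ℂ) l * l = 1 := by
    rw [mul_comm, Complex.mul_conj]
    norm_cast
    simp [Complex.normSq_eq_norm_sq, hl]
  have hφconj : ((starRingEnd ℂ) l) • U φ = φ := by
    rw [hUφ, smul_smul, hll, one_smul]
  -- key: ⟪E x, φ⟫ = conj l * ⟪x, φ⟫
  have hkey : ∀ x : H, ⟪(P ∘ₗ U ∘ₗ P) x, φ⟫_ℂ = (starRingEnd ℂ) l * ⟪x, φ⟫_ℂ := by
    intro x
    calc ⟪(P ∘ₗ U ∘ₗ P) x, φ⟫_ℂ = ⟪U (P x), P φ⟫_ℂ := by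
            rw [LinearMap.comp_apply, LinearMap.comp_apply, hPsa]
      _ = ⟪U (P x), ((starRingEnd ℂ) l) • U φ⟫_ℂ := by rw [hran, hφconj]
      _ = (starRingEnd ℂ) l * ⟪U (P x), U φ⟫_ℂ := by rw [inner_smul_right]
      _ = (starRingEnd ℂ) l * ⟪P x, φ⟫_ℂ := by rw [hU]
      _ = (starRingEnd ℂ) l * ⟪x, φ⟫_ℂ := by rw [hPsa, hran]
  -- induction
  have hind : ∀ (n : ℕ) (x : H),
      ⟪((μ • (1 : H →ₗ[ℂ] H) - (P ∘ₗ U ∘ₗ P)) ^ n) x, φ⟫_ℂ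
        = ((starRingEnd ℂ) μ - (starRingEnd ℂ) l) ^ n * ⟪x, φ⟫_ℂ := by
    intro n
    induction n with
    | zero => intro x; simp
    | succ k ih =>
        intro x
        rw [pow_succ, Module.End.mul_apply, ih]
        have : ⟪(μ • (1 : H →ₗ[ℂ] H) - (P ∘ₗ U ∘ₗ P)) x, φ⟫_ℂ
            = ((starRingEnd ℂ) μ - (starRingEnd ℂ) l) * ⟪x, φ⟫_ℂ := by
          rw [LinearMap.sub_apply, inner_sub_left, LinearMap.smul_apply,
            Module.End.one_apply, inner_smul_left, hkey]
          ring
        rw [this]; ring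
  have h0 := hind m ψ
  rw [hψ, inner_zero_left] at h0
  have hne : (starRingEnd ℂ) μ - (starRingEnd ℂ) l ≠ 0 := by
    intro h
    have : μ = l := by
      have := sub_eq_zero.mp h
      exact (starRingEnd ℂ).injective this
    rw [this, hl] at hμ
    linarith
  have := h0.symm
  rcases mul_eq_zero.mp this with h | h
  · exact absurd h (pow_ne_zero _ hne)
  · exact h
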